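/- arXiv:1911.07155 — 5 statements merged into one kernel-verified Lean document; each statement's English description precedes it below -/
import Mathlib

section
/- Let n ≥ 4 and define, for 1 ≤ i ≤ j ≤ n-1, the type D_n coroot values h_{i,j} acting on a weight λ by λ(h_{i,j}) = λ(h_i) + λ(h_{i+1}) + ... + λ(h_j), and define β_{i,j} = α_i + ... + α_{j-1} + 2(α_j + ... + α_{n-2}) + α_{n-1} + α_n for 1 ≤ i < j ≤ n-1, so that λ(h_{β_{i,j}}) = λ(h_{i,n-1}) + λ(h_{j,n-2}) + λ(h_n) where λ(h_{j,n}) means λ(h_j)+...+λ(h_{n-2})+λ(h_n). Suppose λ₁, λ₂ : {1,...,n} → ℤ≥0 satisfy: (a) λ₁(i) + λ₂(i) ≤ 1 for all i; (b) if λ_r(n-1) + λ_r(n) > 0 then λ_p(n-1) + λ_p(n) = 0 for {r,p} = {1,2}; (c) for 1 ≤ i < j ≤ n with (i,j) ≠ (n-1,n), if λ_r(i) = 1 = λ_r(j) then there is i < s < j with λ_p(s) = 1, where {r,p} = {1,2}. Then for every root of the form α_{i,j} (i.e., α_i + ... + α_j, or α_i + ... + α_{n-2} + α_n when j = n), we have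 |λ₁(h_{α_{i,j}}) − λ₂(h_{α_{i,j}})| ≤ 1. -/
/-- The value `λ(h_a) + ⋯ + λ(h_b)` of a weight on a sum of consecutive simple coroots. -/
def hIcc (lam : ℕ → ℤ) (a b : ℕ) : ℤ := ∑ s ∈ Finset.Icc a b, lam s

/-- Pairing of a weight with the coroot of the type-A root `α_{i,j}` in type `D_n`
(`α_{i,n} = α_i + ⋯ + α_{n-2} + α_n`); zero if `i > j`. -/
def hA (n : ℕ) (lam : ℕ → ℤ) (i j : ℕ) : ℤ :=
  if j < i then 0 else if j = n then hIcc lam i (n - 2) + lam n else hIcc lam i j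

/-- Pairing of a weight with the coroot of `β_{i,j}`:
`λ(h_{β_{i,j}}) = λ(h_{i,n-1}) + λ(h_{j,n-2}) + λ(h_n)`. -/
def hBeta (n : ℕ) (lam : ℕ → ℤ) (i j : ℕ) : ℤ :=
  hIcc lam i (n - 1) + hIcc lam j (n - 2) + lam n

/-- An interlacing pair of type `D_n` weights (weights are `ℕ → ℤ`, with values on
indices `1,…,n`; nonnegativity and the conditions (a)–(c) are built in). -/
def Interlacing (n : ℕ) (l1 l2 : ℕ → ℤ) : Prop :=
  (∀ i, 1 ≤ i → i ≤ n → 0 ≤ l1 i ∧ 0 ≤ l2 i ∧ l1 i + l2 i ≤ 1) ∧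
  (0 < l1 (n - 1) + l1 n → l2 (n - 1) + l2 n = 0) ∧
  (0 < l2 (n - 1) + l2 n → l1 (n - 1) + l1 n = 0) ∧
  (∀ i j, 1 ≤ i → i < j → j ≤ n → ¬(i = n - 1 ∧ j = n) →
    (l1 i = 1 → l1 j = 1 → ∃ s, i < s ∧ s < j ∧ l2 s = 1) ∧
    (l2 i = 1 → l2 j = 1 → ∃ s, i < s ∧ s < j ∧ l1 s = 1))

/-- If between any two elements of `A` there is an element of `B`, then
`A.card ≤ B.card + 1`. -/
lemma interlace_card : ∀ (A B : Finset ℕ),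
    (∀ x ∈ A, ∀ y ∈ A, x < y → ∃ s ∈ B, x < s ∧ s < y) →
    A.card ≤ B.card + 1 := by
  intro A
  induction A using Finset.strongInduction with
  | _ A ih =>
    intro B h
    by_cases hA2 : A.card ≤ 1
    · omega
    push_neg at hA2
    have hne : A.Nonempty := Finset.card_pos.mp (by omega)
    set m := A.max' hne with hm
    have hmA : m ∈ A := A.max'_mem hne
    have hne' : (A.erase m).Nonempty := by
      rw [← Finset.card_pos, Finset.card_erase_of_mem hmA]; omega
    set m' := (A.erase m).max' hne' with hm'
    have hm'A : m' ∈ A.erase m := (A.erase m).max'_mem hne'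
    have hm'lt : m' < m := lt_of_le_of_ne
      (A.le_max' m' (Finset.mem_of_mem_erase hm'A)) (Finset.ne_of_mem_erase hm'A)
    obtain ⟨b, hbB, hb1, hb2⟩ := h m' (Finset.mem_of_mem_erase hm'A) m hmA hm'lt
    have key : ∀ x ∈ A.erase m, ∀ y ∈ A.erase m, x < y →
        ∃ s ∈ B.erase b, x < s ∧ s < y := by
      intro x hx y hy hxy
      obtain ⟨s, hsB, hs1, hs2⟩ :=
        h x (Finset.mem_of_mem_erase hx) y (Finset.mem_of_mem_erase hy) hxy
      have hy' : y ≤ m' := (A.erase m).le_max' y hy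
      exact ⟨s, Finset.mem_erase.mpr ⟨by omega, hsB⟩, hs1, hs2⟩
    have hrec := ih (A.erase m) (Finset.erase_ssubset hmA) (B.erase b) key
    have h1 : (A.erase m).card = A.card - 1 := Finset.card_erase_of_mem hmA
    have h2 : (B.erase b).card = B.card - 1 := Finset.card_erase_of_mem hbB
    have hBpos : 0 < B.card := Finset.card_pos.mpr ⟨b, hbB⟩
    omega

/-- Abstract counting lemma on a finite index set. -/
lemma sum_diff_le (T : Finset ℕ) (l1 l2 : ℕ → ℤ)
    (h01 : ∀ x ∈ T, (l1 x = 0 ∨ l1 x = 1) ∧ (l2 x = 0 ∨ l2 x = 1))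
    (hbw1 : ∀ x ∈ T, ∀ y ∈ T, x < y → l1 x = 1 → l1 y = 1 →
      ∃ s ∈ T, x < s ∧ s < y ∧ l2 s = 1)
    (hbw2 : ∀ x ∈ T, ∀ y ∈ T, x < y → l2 x = 1 → l2 y = 1 →
      ∃ s ∈ T, x < s ∧ s < y ∧ l1 s = 1) :
    |(∑ s ∈ T, l1 s) - (∑ s ∈ T, l2 s)| ≤ 1 := by
  classical
  set A := T.filter (fun x => l1 x = 1) with hA
  set B := T.filter (fun x => l2 x = 1) with hB
  have hs1 : (∑ s ∈ T, l1 s) = (A.card : ℤ) := by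
    rw [hA, ← Finset.sum_boole]
    refine Finset.sum_congr rfl fun x hx => ?_
    rcases (h01 x hx).1 with h | h <;> simp [h]
  have hs2 : (∑ s ∈ T, l2 s) = (B.card : ℤ) := by
    rw [hB, ← Finset.sum_boole]
    refine Finset.sum_congr rfl fun x hx => ?_
    rcases (h01 x hx).2 with h | h <;> simp [h]
  have c1 : A.card ≤ B.card + 1 := by
    refine interlace_card A B ?_
    intro x hx y hy hxy
    rw [hA, Finset.mem_filter] at hx hy
    obtain ⟨s, hsT, h1, h2, h3⟩ := hbw1 x hx.1 y hy.1 hxy hx.2 hy.2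
    exact ⟨s, Finset.mem_filter.mpr ⟨hsT, h3⟩, h1, h2⟩
  have c2 : B.card ≤ A.card + 1 := by
    refine interlace_card B A ?_
    intro x hx y hy hxy
    rw [hB, Finset.mem_filter] at hx hy
    obtain ⟨s, hsT, h1, h2, h3⟩ := hbw2 x hx.1 y hy.1 hxy hx.2 hy.2
    exact ⟨s, Finset.mem_filter.mpr ⟨hsT, h3⟩, h1, h2⟩
  rw [hs1, hs2, abs_le]
  constructor <;> omega

/-- For an interlacing pair in type `D_n`, every type-A root `α_{i,j}` satisfies
`|λ₁(h_{α_{i,j}}) − λ₂(h_{α_{i,j}})| ≤ 1`. -/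
theorem stmt0 (n : ℕ) (hn : 4 ≤ n) (l1 l2 : ℕ → ℤ) (h : Interlacing n l1 l2) :
    ∀ i j, 1 ≤ i → i ≤ j → j ≤ n → |hA n l1 i j - hA n l2 i j| ≤ 1 := by
  obtain ⟨ha, hB1, hB2, hc⟩ := h
  intro i j hi hij hjn
  by_cases hj : j = n
  · have hnotlt : ¬ (j < i) := by omega
    have hnT : n ∉ Finset.Icc i (n - 2) := by
      simp only [Finset.mem_Icc]; omega
    have hsum : ∀ lam : ℕ → ℤ, hA n lam i j
        = ∑ s ∈ insert n (Finset.Icc i (n - 2)), lam s := by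
      intro lam
      rw [hA, if_neg hnotlt, if_pos hj, Finset.sum_insert hnT, hIcc]
      ring
    rw [hsum, hsum]
    set T := insert n (Finset.Icc i (n - 2)) with hT
    have hmem : ∀ x ∈ T, x = n ∨ (i ≤ x ∧ x ≤ n - 2) := by
      intro x hx
      rw [hT, Finset.mem_insert, Finset.mem_Icc] at hx
      tauto
    have hrange : ∀ x ∈ T, 1 ≤ x ∧ x ≤ n := by
      intro x hx; rcases hmem x hx with h | h <;> omega
    refine sum_diff_le T l1 l2 ?_ ?_ ?_
    · intro x hx
      obtain ⟨h1, h2⟩ := hrange x hx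
      obtain ⟨a1, a2, a3⟩ := ha x h1 h2
      constructor <;> omega
    · intro x hx y hy hxy hx1 hy1
      have hxm := hmem x hx
      have hym := hmem y hy
      have hxlt : x < n := lt_of_lt_of_le hxy (hrange y hy).2
      have hxI : i ≤ x ∧ x ≤ n - 2 := by rcases hxm with h | h <;> omega
      have hnp : ¬ (x = n - 1 ∧ y = n) := by omega
      obtain ⟨s, hs1, hs2, hs3⟩ :=
        (hc x y (by omega) hxy (hrange y hy).2 hnp).1 hx1 hy1
      have hsT : s ∈ T := by
        rcases hym with hyn | hyI
        · -- y = n : exclude s = n - 1 via condition (b)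
          rw [hyn] at hy1 hs2
          by_cases hsn : s = n - 1
          · exfalso
            have hl2n : 0 ≤ l2 n := (ha n (by omega) le_rfl).2.1
            have h0 : 0 < l2 (n - 1) + l2 n := by rw [← hsn]; omega
            have := hB2 h0
            have hl1n1 : 0 ≤ l1 (n - 1) := (ha (n - 1) (by omega) (by omega)).1
            omega
          · rw [hT, Finset.mem_insert, Finset.mem_Icc]
            right; omega
        · rw [hT, Finset.mem_insert, Finset.mem_Icc]
          right; omega
      exact ⟨s, hsT, hs1, hs2, hs3⟩
    · intro x hx y hy hxy hx1 hy1
      have hxm := hmem x hx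
      have hym := hmem y hy
      have hxlt : x < n := lt_of_lt_of_le hxy (hrange y hy).2
      have hxI : i ≤ x ∧ x ≤ n - 2 := by rcases hxm with h | h <;> omega
      have hnp : ¬ (x = n - 1 ∧ y = n) := by omega
      obtain ⟨s, hs1, hs2, hs3⟩ :=
        (hc x y (by omega) hxy (hrange y hy).2 hnp).2 hx1 hy1
      have hsT : s ∈ T := by
        rcases hym with hyn | hyI
        · rw [hyn] at hy1 hs2
          by_cases hsn : s = n - 1
          · exfalso
            have hl1n : 0 ≤ l1 n := (ha n (by omega) le_rfl).1
            have h0 : 0 < l1 (n - 1) + l1 n := by rw [← hsn]; omega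
            have := hB1 h0
            have hl2n1 : 0 ≤ l2 (n - 1) := (ha (n - 1) (by omega) (by omega)).2.1
            omega
          · rw [hT, Finset.mem_insert, Finset.mem_Icc]
            right; omega
        · rw [hT, Finset.mem_insert, Finset.mem_Icc]
          right; omega
      exact ⟨s, hsT, hs1, hs2, hs3⟩
  · -- j < n
    have hjlt : j < n := lt_of_le_of_ne hjn hj
    have hnotlt : ¬ (j < i) := by omega
    have hsum : ∀ lam : ℕ → ℤ, hA n lam i j = ∑ s ∈ Finset.Icc i j, lam s := by
      intro lam
      rw [hA, if_neg hnotlt, if_neg hj, hIcc]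
    rw [hsum, hsum]
    have hmem : ∀ x ∈ Finset.Icc i j, i ≤ x ∧ x ≤ j := by
      intro x hx; rwa [Finset.mem_Icc] at hx
    refine sum_diff_le _ l1 l2 ?_ ?_ ?_
    · intro x hx
      obtain ⟨h1, h2⟩ := hmem x hx
      obtain ⟨a1, a2, a3⟩ := ha x (by omega) (by omega)
      constructor <;> omega
    · intro x hx y hy hxy hx1 hy1
      obtain ⟨hx1', hx2'⟩ := hmem x hx
      obtain ⟨hy1', hy2'⟩ := hmem y hy
      have hnp : ¬ (x = n - 1 ∧ y = n) := by omega
      obtain ⟨s, hs1, hs2, hs3⟩ := (hc x y (by omega) hxy (by omega) hnp).1 hx1 hy1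
      exact ⟨s, Finset.mem_Icc.mpr ⟨by omega, by omega⟩, hs1, hs2, hs3⟩
    · intro x hx y hy hxy hx1 hy1
      obtain ⟨hx1', hx2'⟩ := hmem x hx
      obtain ⟨hy1', hy2'⟩ := hmem y hy
      have hnp : ¬ (x = n - 1 ∧ y = n) := by omega
      obtain ⟨s, hs1, hs2, hs3⟩ := (hc x y (by omega) hxy (by omega) hnp).2 hx1 hy1
      exact ⟨s, Finset.mem_Icc.mpr ⟨by omega, by omega⟩, hs1, hs2, hs3⟩
end

section
/- With the setup of type D_n weights: let λ₁, λ₂ : {1,...,n} → ℤ≥0 be an interlacing pair (conditions (a)-(c) as in the definition: λ₁(i)+λ₂(i) ≤ 1 for all i; at most one of λ₁, λ₂ is nonzero on {n-1,n}; and between any two indices i < j (with (i,j) ≠ (n-1,n)) where λ_r equals 1, the other weight λ_p equals 1 at some intermediate index). Suppose (λ₁+λ₂)(h_{n-1}) + (λ₁+λ₂)(h_n) = 1. Then for all 1 ≤ i < j ≤ n-1, |λ₁(h_{β_{i,j}}) − λ₂(h_{β_{i,j}})| ≤ 1, where λ(h_{β_{i,j}}) = λ(h_{i,n-1}) + λ(h_{j,n-2})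 + λ(h_n), with λ(h_{a,b}) = λ(h_a) + ... + λ(h_b). -/
lemma hIcc_empty (lam : ℕ → ℤ) {a b : ℕ} (h : b < a) : hIcc lam a b = 0 := by
  unfold hIcc; rw [Finset.Icc_eq_empty (by omega)]; simp

lemma hIcc_bot (lam : ℕ → ℤ) {a b : ℕ} (h : a ≤ b) :
    hIcc lam a b = lam a + hIcc lam (a+1) b := by
  unfold hIcc
  rw [Finset.Icc_eq_cons_Ioc h, Finset.sum_cons, Finset.Icc_add_one_left_eq_Ioc]

lemma hIcc_top (lam : ℕ → ℤ) {a b : ℕ} (h : a ≤ b + 1) :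
    hIcc lam a (b+1) = hIcc lam a b + lam (b+1) := by
  unfold hIcc; exact Finset.sum_Icc_succ_top h lam

lemma Interlacing.symm {n : ℕ} {l1 l2 : ℕ → ℤ} (h : Interlacing n l1 l2) :
    Interlacing n l2 l1 := by
  obtain ⟨ha, hb, hc, hd⟩ := h
  refine ⟨fun i h1 h2 => ?_, hc, hb, fun i j hi hij hj hne => ?_⟩
  · obtain ⟨x, y, z⟩ := ha i h1 h2; exact ⟨y, x, by linarith⟩
  · exact ⟨(hd i j hi hij hj hne).2, (hd i j hi hij hj hne).1⟩

/-- The key invariant: with `l1` holding the fork one and `l2` vanishing at the fork,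
the shifted partial difference `g a = hIcc l1 a (n-2) - hIcc l2 a (n-2) + 1` stays in
`{0,1}`, with a pending witness. -/
lemma hIcc_split (lam : ℕ → ℤ) {n i : ℕ} (hn : 4 ≤ n) (hi : i ≤ n - 1) :
    hIcc lam i (n-1) = hIcc lam i (n-2) + lam (n-1) := by
  rw [show n - 1 = (n-2)+1 from by omega, hIcc_top lam (by omega),
    show n - 2 + 1 = n - 1 from by omega]

lemma key_inv (n : ℕ) (hn : 4 ≤ n) (l1 l2 : ℕ → ℤ) (h : Interlacing n l1 l2)
    (h1 : l1 (n-1) + l1 n = 1) (h2a : l2 (n-1) = 0) (h2b : l2 n = 0) :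
    ∀ a, 1 ≤ a → a ≤ n - 1 →
      (hIcc l1 a (n-2) - hIcc l2 a (n-2) + 1 = 1 ∧
        ∃ t, a ≤ t ∧ t ≤ n ∧ l1 t = 1 ∧ ∀ s, a ≤ s → s < t → l2 s = 0) ∨
      (hIcc l1 a (n-2) - hIcc l2 a (n-2) + 1 = 0 ∧
        ∃ t, a ≤ t ∧ t ≤ n ∧ l2 t = 1 ∧ ∀ s, a ≤ s → s < t → l1 s = 0) := by
  obtain ⟨ha, -, -, hd⟩ := h
  -- base case helper
  have base : ∀ a, a = n - 1 →
      (hIcc l1 a (n-2) - hIcc l2 a (n-2) + 1 = 1 ∧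
        ∃ t, a ≤ t ∧ t ≤ n ∧ l1 t = 1 ∧ ∀ s, a ≤ s → s < t → l2 s = 0) := by
    intro a haeq
    subst haeq
    have e1 : hIcc l1 (n-1) (n-2) = 0 := hIcc_empty _ (by omega)
    have e2 : hIcc l2 (n-1) (n-2) = 0 := hIcc_empty _ (by omega)
    refine ⟨by omega, ?_⟩
    have b1 := ha (n-1) (by omega) (by omega)
    have b2 := ha n (by omega) (by omega)
    rcases (show l1 (n-1) = 1 ∨ l1 n = 1 by omega) with hc | hc
    · exact ⟨n-1, le_rfl, by omega, hc, fun s hs1 hs2 => by omega⟩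
    · refine ⟨n, by omega, le_rfl, hc, fun s hs1 hs2 => ?_⟩
      have : s = n - 1 := by omega
      rw [this]; exact h2a
  suffices H : ∀ k a, 1 ≤ a → a ≤ n - 1 → n - 1 - a ≤ k →
      (hIcc l1 a (n-2) - hIcc l2 a (n-2) + 1 = 1 ∧
        ∃ t, a ≤ t ∧ t ≤ n ∧ l1 t = 1 ∧ ∀ s, a ≤ s → s < t → l2 s = 0) ∨
      (hIcc l1 a (n-2) - hIcc l2 a (n-2) + 1 = 0 ∧
        ∃ t, a ≤ t ∧ t ≤ n ∧ l2 t = 1 ∧ ∀ s, a ≤ s → s < t → l1 s = 0) by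
    intro a h1a h2'
    exact H (n - 1 - a) a h1a h2' le_rfl
  intro k
  induction k with
  | zero =>
    intro a h1a h2' hk
    exact Or.inl (base a (by omega))
  | succ k ih =>
    intro a h1a h2' hk
    by_cases hend : a = n - 1
    · exact Or.inl (base a hend)
    · have halt : a ≤ n - 2 := by omega
      have step1 : hIcc l1 a (n-2) = l1 a + hIcc l1 (a+1) (n-2) := hIcc_bot _ halt
      have step2 : hIcc l2 a (n-2) = l2 a + hIcc l2 (a+1) (n-2) := hIcc_bot _ halt
      have bnds := ha a h1a (by omega)
      rcases ih (a+1) (by omega) (by omega) (by omega) with ⟨hg, t, ht1, ht2, ht3, ht4⟩ |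
        ⟨hg, t, ht1, ht2, ht3, ht4⟩
      · -- state 1 at a+1, pending l1 one at t
        by_cases hl1 : l1 a = 1
        · -- impossible: two l1 ones at a and t with no l2 in between
          exfalso
          have hne : ¬(a = n - 1 ∧ t = n) := by omega
          obtain ⟨s, hs1, hs2, hs3⟩ := (hd a t h1a (by omega) ht2 hne).1 hl1 ht3
          have := ht4 s (by omega) hs2
          omega
        · have hl1' : l1 a = 0 := by omega
          by_cases hl2 : l2 a = 1
          · refine Or.inr ⟨by omega, a, le_rfl, by omega, hl2,
              fun s hs1 hs2 => by omega⟩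
          · have hl2' : l2 a = 0 := by omega
            refine Or.inl ⟨by omega, t, by omega, ht2, ht3, fun s hs1 hs2 => ?_⟩
            rcases eq_or_lt_of_le hs1 with rfl | hlt
            · exact hl2'
            · exact ht4 s (by omega) hs2
      · -- state 0 at a+1, pending l2 one at t
        by_cases hl2 : l2 a = 1
        · exfalso
          have hne : ¬(a = n - 1 ∧ t = n) := by omega
          obtain ⟨s, hs1, hs2, hs3⟩ := (hd a t h1a (by omega) ht2 hne).2 hl2 ht3
          have := ht4 s (by omega) hs2
          omega
        · have hl2' : l2 a = 0 := by omega
          by_cases hl1 : l1 a = 1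
          · refine Or.inl ⟨by omega, a, le_rfl, by omega, hl1,
              fun s hs1 hs2 => by omega⟩
          · have hl1' : l1 a = 0 := by omega
            refine Or.inr ⟨by omega, t, by omega, ht2, ht3, fun s hs1 hs2 => ?_⟩
            rcases eq_or_lt_of_le hs1 with rfl | hlt
            · exact hl1'
            · exact ht4 s (by omega) hs2

lemma key (n : ℕ) (hn : 4 ≤ n) (l1 l2 : ℕ → ℤ) (h : Interlacing n l1 l2)
    (h1 : l1 (n-1) + l1 n = 1) (h2a : l2 (n-1) = 0) (h2b : l2 n = 0) :
    ∀ i j, 1 ≤ i → i < j → j ≤ n - 1 → |hBeta n l1 i j - hBeta n l2 i j| ≤ 1 := by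
  intro i j hi hij hj
  have spliti1 : hIcc l1 i (n-1) = hIcc l1 i (n-2) + l1 (n-1) :=
    hIcc_split l1 hn (by omega)
  have spliti2 : hIcc l2 i (n-1) = hIcc l2 i (n-2) + l2 (n-1) :=
    hIcc_split l2 hn (by omega)
  rcases key_inv n hn l1 l2 h h1 h2a h2b i hi (by omega) with ⟨hgi, -⟩ | ⟨hgi, -⟩ <;>
    rcases key_inv n hn l1 l2 h h1 h2a h2b j (by omega) hj with ⟨hgj, -⟩ | ⟨hgj, -⟩ <;>
  · unfold hBeta
    rw [spliti1, spliti2, abs_le]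
    constructor <;> linarith

/-- If `(λ₁+λ₂)(h_{n-1}) + (λ₁+λ₂)(h_n) = 1` for an interlacing pair, then
`|λ₁(h_{β_{i,j}}) − λ₂(h_{β_{i,j}})| ≤ 1` for all `1 ≤ i < j ≤ n-1`. -/
theorem stmt1 (n : ℕ) (hn : 4 ≤ n) (l1 l2 : ℕ → ℤ) (h : Interlacing n l1 l2)
    (hfork : (l1 (n - 1) + l2 (n - 1)) + (l1 n + l2 n) = 1) :
    ∀ i j, 1 ≤ i → i < j → j ≤ n - 1 → |hBeta n l1 i j - hBeta n l2 i j| ≤ 1 := by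
  intro i j hi hij hj
  have b1 := h.1 (n-1) (by omega) (by omega)
  have b2 := h.1 n (by omega) (by omega)
  rcases (show (l1 (n-1) + l1 n = 1 ∧ l2 (n-1) = 0 ∧ l2 n = 0) ∨
      (l2 (n-1) + l2 n = 1 ∧ l1 (n-1) = 0 ∧ l1 n = 0) by omega) with
    ⟨c1, c2, c3⟩ | ⟨c1, c2, c3⟩
  · exact key n hn l1 l2 h c1 c2 c3 i j hi hij hj
  · rw [abs_sub_comm]
    exact key n hn l2 l1 h.symm c1 c2 c3 i j hi hij hj
end

section
/- Let (λ₁, λ₂) be an interlacing pair of type D_n weights with λ₁(h_{n-1}) + λ₁(h_n) = 0 = λ₂(h_{n-1}) + λ₂(h_n). Then for 1 ≤ i < j ≤ n-1, |λ₁(h_{β_{i,j}}) − λ₂(h_{β_{i,j}})| = 2 if and only if (λ₁ − λ₂)(h_{i,j-1}) = 0 and (λ₁ − λ₂)(h_{j,n-2}) = ±1, where (λ₁−λ₂)(h_{a,b}) denotes Σ_{s=a}^{b} (λ₁(h_s) − λ₂(h_s)) (equal to 0 when a > b). -/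
lemma hIcc_split_s3 (l : ℕ → ℤ) (a b c : ℕ) (hab : a ≤ b + 1) (hbc : b ≤ c) :
    hIcc l a c = hIcc l a b + hIcc l (b + 1) c := by
  by_cases hab' : a ≤ b
  · have hu : Finset.Icc a c = Finset.Icc a b ∪ Finset.Icc (b + 1) c := by
      ext x
      simp only [Finset.mem_Icc, Finset.mem_union]
      omega
    have hd : Disjoint (Finset.Icc a b) (Finset.Icc (b + 1) c) := by
      rw [Finset.disjoint_left]
      intro x hx hx'
      simp only [Finset.mem_Icc] at hx hx'
      omega
    unfold hIcc
    rw [hu, Finset.sum_union hd]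
  · have ha : a = b + 1 := by omega
    have : Finset.Icc a b = ∅ := Finset.Icc_eq_empty (by omega)
    unfold hIcc
    rw [this, ha]
    simp

lemma bound (n : ℕ) (hn : 4 ≤ n) (l1 l2 : ℕ → ℤ) (h : Interlacing n l1 l2)
    (a b : ℕ) (ha : 1 ≤ a) (hb : b ≤ n - 2) :
    |hIcc l1 a b - hIcc l2 a b| ≤ 1 := by
  obtain ⟨hv, -, -, hil⟩ := h
  suffices H : ∀ b, b ≤ n - 2 →
      (hIcc l1 a b - hIcc l2 a b = 0 ∨
       (hIcc l1 a b - hIcc l2 a b = 1 ∧ ∃ t, a ≤ t ∧ t ≤ b ∧ l1 t = 1 ∧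
          ∀ s, t < s → s ≤ b → l1 s = 0 ∧ l2 s = 0) ∨
       (hIcc l1 a b - hIcc l2 a b = -1 ∧ ∃ t, a ≤ t ∧ t ≤ b ∧ l2 t = 1 ∧
          ∀ s, t < s → s ≤ b → l1 s = 0 ∧ l2 s = 0)) by
    rcases H b hb with h0 | ⟨h1, -⟩ | ⟨h1, -⟩
    · rw [h0]; norm_num
    · rw [h1]; norm_num
    · rw [h1]; norm_num
  intro b
  induction b with
  | zero =>
    intro _
    left
    have : Finset.Icc a 0 = ∅ := Finset.Icc_eq_empty (by omega)
    simp [hIcc, this]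
  | succ b ih =>
    intro hb1
    by_cases hab : a ≤ b + 1
    · have e1 : hIcc l1 a (b + 1) = hIcc l1 a b + l1 (b + 1) :=
        Finset.sum_Icc_succ_top hab l1
      have e2 : hIcc l2 a (b + 1) = hIcc l2 a b + l2 (b + 1) :=
        Finset.sum_Icc_succ_top hab l2
      have hv1 := hv (b + 1) (by omega) (by omega)
      rcases ih (by omega) with h0 | ⟨hg, t, hta, htb, ht1, hts⟩ | ⟨hg, t, hta, htb, ht1, hts⟩
      · -- previous sum difference is 0
        rcases (by omega : l1 (b + 1) = 0 ∧ l2 (b + 1) = 0 ∨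
            l1 (b + 1) = 1 ∧ l2 (b + 1) = 0 ∨ l1 (b + 1) = 0 ∧ l2 (b + 1) = 1) with
          ⟨c1, c2⟩ | ⟨c1, c2⟩ | ⟨c1, c2⟩
        · left; omega
        · right; left
          exact ⟨by omega, b + 1, hab, le_refl _, c1, fun s hs1 hs2 => by omega⟩
        · right; right
          exact ⟨by omega, b + 1, hab, le_refl _, c2, fun s hs1 hs2 => by omega⟩
      · -- previous sum difference is 1
        rcases (by omega : l1 (b + 1) = 0 ∧ l2 (b + 1) = 0 ∨
            l1 (b + 1) = 1 ∧ l2 (b + 1) = 0 ∨ l1 (b + 1) = 0 ∧ l2 (b + 1) = 1) with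
          ⟨c1, c2⟩ | ⟨c1, c2⟩ | ⟨c1, c2⟩
        · right; left
          refine ⟨by omega, t, hta, by omega, ht1, fun s hs1 hs2 => ?_⟩
          by_cases hsb : s ≤ b
          · exact hts s hs1 hsb
          · have : s = b + 1 := by omega
            subst this
            exact ⟨c1, c2⟩
        · -- contradiction with interlacing
          exfalso
          obtain ⟨s, hs1, hs2, hs3⟩ :=
            (hil t (b + 1) (by omega) (by omega) (by omega) (by omega)).1 ht1 c1
          have := (hts s hs1 (by omega)).2
          omega
        · left; omega
      · -- previous sum difference is -1
        rcases (by omega : l1 (b + 1) = 0 ∧ l2 (b + 1) = 0 ∨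
            l1 (b + 1) = 1 ∧ l2 (b + 1) = 0 ∨ l1 (b + 1) = 0 ∧ l2 (b + 1) = 1) with
          ⟨c1, c2⟩ | ⟨c1, c2⟩ | ⟨c1, c2⟩
        · right; right
          refine ⟨by omega, t, hta, by omega, ht1, fun s hs1 hs2 => ?_⟩
          by_cases hsb : s ≤ b
          · exact hts s hs1 hsb
          · have : s = b + 1 := by omega
            subst this
            exact ⟨c1, c2⟩
        · left; omega
        · exfalso
          obtain ⟨s, hs1, hs2, hs3⟩ :=
            (hil t (b + 1) (by omega) (by omega) (by omega) (by omega)).2 ht1 c2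
          have := (hts s hs1 (by omega)).1
          omega
    · left
      have e : Finset.Icc a (b + 1) = ∅ := Finset.Icc_eq_empty (by omega)
      simp [hIcc, e]

/-- If both weights of an interlacing pair vanish on `{n-1, n}`, then
`|λ₁(h_{β_{i,j}}) − λ₂(h_{β_{i,j}})| = 2` iff `(λ₁−λ₂)(h_{i,j-1}) = 0` and
`(λ₁−λ₂)(h_{j,n-2}) = ±1`. -/
theorem stmt3 (n : ℕ) (hn : 4 ≤ n) (l1 l2 : ℕ → ℤ) (h : Interlacing n l1 l2)
    (h1 : l1 (n - 1) + l1 n = 0) (h2 : l2 (n - 1) + l2 n = 0) :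
    ∀ i j, 1 ≤ i → i < j → j ≤ n - 1 →
      (|hBeta n l1 i j - hBeta n l2 i j| = 2 ↔
        (hIcc l1 i (j - 1) - hIcc l2 i (j - 1) = 0 ∧
          |hIcc l1 j (n - 2) - hIcc l2 j (n - 2)| = 1)) := by
  intro i j hi hij hjn
  have hz1 : l1 (n - 1) = 0 ∧ l1 n = 0 := by
    have := h.1 (n - 1) (by omega) (by omega)
    have := h.1 n (by omega) (le_refl n)
    omega
  have hz2 : l2 (n - 1) = 0 ∧ l2 n = 0 := by
    have := h.1 (n - 1) (by omega) (by omega)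
    have := h.1 n (by omega) (le_refl n)
    omega
  have split : ∀ l : ℕ → ℤ, hIcc l i (n - 2) = hIcc l i (j - 1) + hIcc l j (n - 2) := by
    intro l
    have := hIcc_split_s3 l i (j - 1) (n - 2) (by omega) (by omega)
    rwa [show j - 1 + 1 = j by omega] at this
  have key : ∀ l : ℕ → ℤ, l (n - 1) = 0 → l n = 0 →
      hBeta n l i j = hIcc l i (j - 1) + 2 * hIcc l j (n - 2) := by
    intro l ha hb
    have e1 : hIcc l i (n - 1) = hIcc l i (n - 2) + l (n - 1) := by
      have hrw : n - 1 = (n - 2) + 1 := by omega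
      rw [hrw]
      exact Finset.sum_Icc_succ_top (by omega) l
    unfold hBeta
    rw [e1, split l, ha, hb]
    ring
  have bAB := bound n hn l1 l2 h i (n - 2) hi (le_refl _)
  have bB := bound n hn l1 l2 h j (n - 2) (by omega) (le_refl _)
  rw [split l1, split l2] at bAB
  rw [key l1 hz1.1 hz1.2, key l2 hz2.1 hz2.2]
  rw [abs_le] at bAB bB
  rw [abs_eq (by norm_num : (0:ℤ) ≤ 2), abs_eq (by norm_num : (0:ℤ) ≤ 1)]
  omega
end

section
/- Let (λ₁, λ₂) be an interlacing pair of type D_n weights with λ₁(h_{n-1}) + λ₁(h_n) = 2 and (λ₁+λ₂)(h_{n-2}) = 0, and suppose (λ₁,λ₂) ≠ (ω_{n-1}+ω_n, ω_{n-2}). Then β_{n-2,n-1} ∈ R(λ₁,λ₂), i.e., |λ₁(h_{β_{n-2,n-1}}) − λ₂(h_{β_{n-2,n-1}})| = 2, and for every β_{i,j} ∈ R(λ₁,λ₂), the difference β_{i,j} − β_{n-2,n-1} equals α_{i,n-3} + α_{j,n-2} (a sum of at most two positive roots, interpreting α_{a,b} as zero if a > b). -/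
/-- Coefficient function (on simple roots) of `α_{a,b} = α_a + ⋯ + α_b`; zero if `a > b`. -/
def alphaCoeff (a b k : ℕ) : ℤ := if a ≤ k ∧ k ≤ b then 1 else 0

/-- Coefficient function of `β_{i,j} = α_i + ⋯ + α_{j-1} + 2(α_j + ⋯ + α_{n-2}) + α_{n-1} + α_n`. -/
def betaCoeff (n i j k : ℕ) : ℤ :=
  (if i ≤ k ∧ k ≤ j - 1 then 1 else 0) + 2 * (if j ≤ k ∧ k ≤ n - 2 then 1 else 0) +
    (if k = n - 1 ∨ k = n then 1 else 0)

lemma hBeta_top (n : ℕ) (hn : 4 ≤ n) (lam : ℕ → ℤ) :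
    hBeta n lam (n - 2) (n - 1) = lam (n - 2) + lam (n - 1) + lam n := by
  unfold hBeta hIcc
  have e1 : Finset.Icc (n - 1) (n - 2) = ∅ := by rw [Finset.Icc_eq_empty_iff]; omega
  have e2 : Finset.Icc (n - 2) (n - 1) = {n - 2, n - 1} := by
    ext x; simp [Finset.mem_Icc]; omega
  rw [e1, e2, Finset.sum_insert (by simp; omega), Finset.sum_singleton, Finset.sum_empty]
  ring

/-- Case `λ₁(h_{n-1}) + λ₁(h_n) = 2`, `(λ₁+λ₂)(h_{n-2}) = 0`, `(λ₁,λ₂) ≠ (ω_{n-1}+ω_n, ω_{n-2})`: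
then `β_{n-2,n-1} ∈ R(λ₁,λ₂)` and for each `β_{i,j} ∈ R(λ₁,λ₂)` one has
`β_{i,j} − β_{n-2,n-1} = α_{i,n-3} + α_{j,n-2}` in the root lattice. -/
theorem stmt6 (n : ℕ) (hn : 4 ≤ n) (l1 l2 : ℕ → ℤ) (h : Interlacing n l1 l2)
    (h1 : l1 (n - 1) + l1 n = 2) (h2 : l1 (n - 2) + l2 (n - 2) = 0)
    (hne : ¬(∀ i, 1 ≤ i → i ≤ n →
      l1 i = (if i = n - 1 ∨ i = n then (1 : ℤ) else 0) ∧
      l2 i = (if i = n - 2 then (1 : ℤ) else 0))) :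
    |hBeta n l1 (n - 2) (n - 1) - hBeta n l2 (n - 2) (n - 1)| = 2 ∧
      ∀ i j, 1 ≤ i → i < j → j ≤ n - 1 → |hBeta n l1 i j - hBeta n l2 i j| = 2 →
        ∀ k, betaCoeff n i j k - betaCoeff n (n - 2) (n - 1) k =
          alphaCoeff i (n - 3) k + alphaCoeff j (n - 2) k := by
  refine ⟨?_, ?_⟩
  · rw [hBeta_top n hn l1, hBeta_top n hn l2]
    obtain ⟨hb, -, -, -⟩ := h
    have b1 := hb (n - 1) (by omega) (by omega)
    have b2 := hb n (by omega) (by omega)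
    have b3 := hb (n - 2) (by omega) (by omega)
    have : l1 (n - 2) + l1 (n - 1) + l1 n - (l2 (n - 2) + l2 (n - 1) + l2 n) = 2 := by omega
    rw [this]; norm_num
  · intro i j hi hij hjn _ k
    unfold betaCoeff alphaCoeff
    split_ifs <;> omega
end

section
/- Let (λ₁, λ₂) be an interlacing pair of type D_n weights with λ₁(h_{n-1}) = 1 and λ₁(h_n) = λ₂(h_n) = λ₂(h_{n-1}) = 0. Then for all 1 ≤ i < j ≤ n-1: (λ₁ − λ₂)(h_{i,n-2}) ≤ 0, (λ₁ − λ₂)(h_{j,n-2}) ≤ 0, and consequently λ₁(h_{β_{i,j}}) − λ₂(h_{β_{i,j}}) ≤ 1. -/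
lemma sum_Icc_split (f : ℕ → ℤ) (a c b : ℕ) (h1 : a ≤ c + 1) (h2 : c ≤ b) :
    ∑ s ∈ Finset.Icc a b, f s =
      ∑ s ∈ Finset.Icc a c, f s + ∑ s ∈ Finset.Icc (c + 1) b, f s := by
  rw [← Finset.sum_union]
  · congr 1
    ext x
    simp only [Finset.mem_union, Finset.mem_Icc]
    omega
  · rw [Finset.disjoint_left]
    intro x hx hx'
    simp only [Finset.mem_Icc] at hx hx'
    omega

lemma key_s13 (a : ℕ) (d : ℕ → ℤ) :
    ∀ b, (∀ s, a ≤ s → s ≤ b → -1 ≤ d s ∧ d s ≤ 1) →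
    (∀ i j, a ≤ i → i < j → j ≤ b → d i = 1 → d j = 1 →
      ∃ s, i < s ∧ s < j ∧ d s = -1) →
    ∑ s ∈ Finset.Icc a b, d s ≤ 1 := by
  intro b
  induction b using Nat.strong_induction_on with
  | _ b IH =>
    intro hd halt
    rcases Nat.lt_or_ge b a with hba | hba
    · rw [Finset.Icc_eq_empty_of_lt hba]; simp
    rcases Nat.eq_or_lt_of_le hba with rfl | hab
    · simp only [Finset.Icc_self, Finset.sum_singleton]
      exact (hd _ le_rfl le_rfl).2
    -- a < b
    have hsplit : ∑ s ∈ Finset.Icc a b, d s =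
        ∑ s ∈ Finset.Icc a (b - 1), d s + d b := by
      rw [sum_Icc_split d a (b - 1) b (by omega) (by omega)]
      congr 1
      have : Finset.Icc (b - 1 + 1) b = {b} := by
        have : b - 1 + 1 = b := by omega
        rw [this, Finset.Icc_self]
      rw [this, Finset.sum_singleton]
    have IH1 : ∑ s ∈ Finset.Icc a (b - 1), d s ≤ 1 :=
      IH (b - 1) (by omega) (fun s hs hs' => hd s hs (by omega))
        (fun i j hi hij hj => halt i j hi hij (by omega))
    rcases le_or_gt (d b) 0 with hdb | hdb
    · omega
    have hdb1 : d b = 1 := by have := hd b (by omega) le_rfl; omega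
    -- need sum over Icc a (b-1) ≤ 0
    by_contra hcon
    have hsum1 : ∑ s ∈ Finset.Icc a (b - 1), d s = 1 := by omega
    -- there is an index with d = 1
    set T := (Finset.Icc a (b - 1)).filter (fun s => d s = 1) with hT
    have hTne : T.Nonempty := by
      by_contra hTe
      have : ∀ s ∈ Finset.Icc a (b - 1), d s ≤ 0 := by
        intro s hs
        simp only [Finset.mem_Icc] at hs
        have h1 := hd s hs.1 (by omega)
        by_contra hc
        have hds : d s = 1 := by omega
        exact hTe ⟨s, Finset.mem_filter.mpr ⟨Finset.mem_Icc.mpr hs, hds⟩⟩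
      have := Finset.sum_nonpos this
      omega
    set i := T.max' hTne with hi
    have hiT : i ∈ T := T.max'_mem hTne
    have himem : a ≤ i ∧ i ≤ b - 1 := by
      have := (Finset.mem_filter.mp hiT).1
      simpa [Finset.mem_Icc] using this
    have hdi : d i = 1 := (Finset.mem_filter.mp hiT).2
    have hmax : ∀ s, i < s → s ≤ b - 1 → d s ≤ 0 := by
      intro s hs hs'
      by_contra hc
      have hds : d s = 1 := by have := hd s (by omega) (by omega); omega
      have : s ∈ T := Finset.mem_filter.mpr
        ⟨Finset.mem_Icc.mpr ⟨by omega, hs'⟩, hds⟩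
      have := T.le_max' s this
      omega
    by_cases hneg : ∃ t, i < t ∧ t ≤ b - 1 ∧ d t = -1
    · obtain ⟨t, hti, htb, hdt⟩ := hneg
      -- sum over Icc t (b-1) ≤ -1, so sum over Icc a (t-1) ≥ 2
      have hsp : ∑ s ∈ Finset.Icc a (b - 1), d s =
          ∑ s ∈ Finset.Icc a (t - 1), d s + ∑ s ∈ Finset.Icc t (b - 1), d s := by
        have ht1 : t - 1 + 1 = t := by omega
        rw [sum_Icc_split d a (t - 1) (b - 1) (by omega) (by omega), ht1]
      have hsp2 : ∑ s ∈ Finset.Icc t (b - 1), d s =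
          d t + ∑ s ∈ Finset.Icc (t + 1) (b - 1), d s := by
        rw [sum_Icc_split d t t (b - 1) (by omega) (by omega)]
        simp
      have htail : ∑ s ∈ Finset.Icc (t + 1) (b - 1), d s ≤ 0 := by
        apply Finset.sum_nonpos
        intro s hs
        simp only [Finset.mem_Icc] at hs
        exact hmax s (by omega) hs.2
      have hIH2 : ∑ s ∈ Finset.Icc a (t - 1), d s ≤ 1 :=
        IH (t - 1) (by omega) (fun s hs hs' => hd s hs (by omega))
          (fun i' j' hi' hij' hj' => halt i' j' hi' hij' (by omega))
      omega
    · push_neg at hneg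
      obtain ⟨s, hs1, hs2, hs3⟩ := halt i b himem.1 (by omega) le_rfl hdi hdb1
      exact absurd hs3 (by have := hneg s hs1 (by omega); omega)

/-- If `λ₁(h_{n-1}) = 1` and `λ₁(h_n) = λ₂(h_{n-1}) = λ₂(h_n) = 0` for an interlacing pair,
then `(λ₁−λ₂)(h_{i,n-2}) ≤ 0`, `(λ₁−λ₂)(h_{j,n-2}) ≤ 0`, and
`λ₁(h_{β_{i,j}}) − λ₂(h_{β_{i,j}}) ≤ 1`. -/
theorem stmt13 (n : ℕ) (hn : 4 ≤ n) (l1 l2 : ℕ → ℤ) (h : Interlacing n l1 l2)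
    (h1 : l1 (n - 1) = 1) (h2 : l1 n = 0) (h3 : l2 (n - 1) = 0) (h4 : l2 n = 0) :
    ∀ i j, 1 ≤ i → i < j → j ≤ n - 1 →
      (hIcc l1 i (n - 2) - hIcc l2 i (n - 2) ≤ 0 ∧
        hIcc l1 j (n - 2) - hIcc l2 j (n - 2) ≤ 0 ∧
        hBeta n l1 i j - hBeta n l2 i j ≤ 1) := by
  obtain ⟨ha, -, -, hc⟩ := h
  intro i j hi hij hj
  set d : ℕ → ℤ := fun s => l1 s - l2 s with hddef
  have hlink : ∀ a b : ℕ, hIcc l1 a b - hIcc l2 a b = ∑ s ∈ Finset.Icc a b, d s := by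
    intro a b
    simp only [hIcc, hddef, Finset.sum_sub_distrib]
  have hdn1 : d (n - 1) = 1 := by simp only [hddef]; omega
  have main : ∀ a, 1 ≤ a → a ≤ n - 1 → ∑ s ∈ Finset.Icc a (n - 2), d s ≤ 0 := by
    intro a ha1 ha2
    rcases Nat.eq_or_lt_of_le ha2 with rfl | halt2
    · rw [Finset.Icc_eq_empty_of_lt (by omega)]; simp
    have hkey : ∑ s ∈ Finset.Icc a (n - 1), d s ≤ 1 := by
      apply key_s13 a d (n - 1)
      · intro s hs hs'
        have := ha s (by omega) (by omega)
        simp only [hddef]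
        omega
      · intro i' j' hi' hij' hj' hdi' hdj'
        have hai' := ha i' (by omega) (by omega)
        have haj' := ha j' (by omega) (by omega)
        have hl1i : l1 i' = 1 := by simp only [hddef] at hdi'; omega
        have hl1j : l1 j' = 1 := by simp only [hddef] at hdj'; omega
        obtain ⟨s, hs1, hs2, hs3⟩ := (hc i' j' (by omega) hij' (by omega)
          (by omega)).1 hl1i hl1j
        refine ⟨s, hs1, hs2, ?_⟩
        have := ha s (by omega) (by omega)
        simp only [hddef]
        omega
    have hsp : ∑ s ∈ Finset.Icc a (n - 1), d s =
        ∑ s ∈ Finset.Icc a (n - 2), d s + ∑ s ∈ Finset.Icc (n - 2 + 1) (n - 1), d s := by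
      exact sum_Icc_split d a (n - 2) (n - 1) (by omega) (by omega)
    have hone : ∑ s ∈ Finset.Icc (n - 2 + 1) (n - 1), d s = 1 := by
      have : n - 2 + 1 = n - 1 := by omega
      rw [this, Finset.Icc_self, Finset.sum_singleton, hdn1]
    omega
  have hmi := main i hi (by omega)
  have hmj := main j (by omega) hj
  refine ⟨by rw [hlink]; exact hmi, by rw [hlink]; exact hmj, ?_⟩
  have hbeta : hBeta n l1 i j - hBeta n l2 i j =
      (hIcc l1 i (n - 1) - hIcc l2 i (n - 1)) +
        (hIcc l1 j (n - 2) - hIcc l2 j (n - 2)) + (l1 n - l2 n) := by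
    simp only [hBeta]; ring
  have hin1 : hIcc l1 i (n - 1) - hIcc l2 i (n - 1) =
      (hIcc l1 i (n - 2) - hIcc l2 i (n - 2)) + 1 := by
    rw [hlink, hlink]
    rw [sum_Icc_split d i (n - 2) (n - 1) (by omega) (by omega)]
    have : n - 2 + 1 = n - 1 := by omega
    rw [this, Finset.Icc_self, Finset.sum_singleton, hdn1]
  rw [hbeta, hin1, h2, h4]
  have := hlink i (n - 2)
  have := hlink j (n - 2)
  omega
end
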